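/- Let k ≥ 2 be even, let G_k be a 3-regular bipartite graph on 2k vertices with bipartition into independent sets A and B of size k, and let H_k be as constructed. If G_k has no Hamiltonian cycle, then every σ ∈ Res(G_k, H_k) satisfies MMC(σ) ≥ 4, where MMC(σ) is the maximum degree of a vertex of the mismatch graph G_k^σ − H_k. -/

import Mathlib

open SimpleGraph

section MismatchDefs

variable {V W : Type*}

/-- The mismatch graph `G^π − H`: the symmetric difference of the image of `G` under the
bijection `π` with `H`, as a graph on `V(H)`. Its edges are the positive edges
(edges of `G^π` not in `H`) together with the negative edges (edges of `H` not in `G^π`). -/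
def mismatchGraph (G : SimpleGraph V) (H : SimpleGraph W) (π : V ≃ W) : SimpleGraph W :=
  symmDiff (G.map π.toEmbedding) H

/-- The degree of a vertex in the mismatch graph `G^π − H`. -/
noncomputable def mismatchDeg (G : SimpleGraph V) (H : SimpleGraph W) (π : V ≃ W) (x : W) : ℕ :=
  ((mismatchGraph G H π).neighborSet x).ncard

/-- The number of positive edges of `G^π − H` incident to `x`. -/
noncomputable def posDeg (G : SimpleGraph V) (H : SimpleGraph W) (π : V ≃ W) (x : W) : ℕ :=
  ((G.map π.toEmbedding).neighborSet x \ H.neighborSet x).ncard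

/-- The number of negative edges of `G^π − H` incident to `x`. -/
noncomputable def negDeg (G : SimpleGraph V) (H : SimpleGraph W) (π : V ≃ W) (x : W) : ℕ :=
  (H.neighborSet x \ (G.map π.toEmbedding).neighborSet x).ncard

/-- The maximum mismatch count `MMC(π)`: the maximum degree of the mismatch graph `G^π − H`. -/
noncomputable def MMC [Fintype W] (G : SimpleGraph V) (H : SimpleGraph W) (π : V ≃ W) : ℕ :=
  Finset.univ.sup (mismatchDeg G H π)

/-- The edit mismatch norm `μ_edit(G^π, H)`: the number of edges of the mismatch graph. -/
noncomputable def muEdit (G : SimpleGraph V) (H : SimpleGraph W) (π : V ≃ W) : ℕ :=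
  (mismatchGraph G H π).edgeSet.ncard

/-- The edit distance `δ_edit(G, H)`: the minimum of `μ_edit(G^π, H)` over all bijections. -/
noncomputable def deltaEdit (G : SimpleGraph V) (H : SimpleGraph W) : ℕ :=
  ⨅ π : V ≃ W, muEdit G H π

open Classical in
/-- The signed adjacency matrix of the mismatch graph `G^π − H`:
`+1` on positive edges, `−1` on negative edges, `0` otherwise. -/
noncomputable def signedAdj (G : SimpleGraph V) (H : SimpleGraph W) (π : V ≃ W) :
    Matrix W W ℝ := fun x y =>
  if (G.map π.toEmbedding).Adj x y ∧ ¬ H.Adj x y then 1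
  else if H.Adj x y ∧ ¬ (G.map π.toEmbedding).Adj x y then -1 else 0

/-- The `ℓ_p` norm of a vector over a finite index type. -/
noncomputable def lpNorm [Fintype W] (p : ℝ) (x : W → ℝ) : ℝ :=
  (∑ i, |x i| ^ p) ^ p⁻¹

/-- The `ℓ_p`-operator norm of a matrix: `sup_{x ≠ 0} ‖Mx‖_p / ‖x‖_p`. -/
noncomputable def lpOpNorm [Fintype W] (p : ℝ) (M : Matrix W W ℝ) : ℝ :=
  ⨆ x : {x : W → ℝ // x ≠ 0}, lpNorm p (M.mulVec x.1) / lpNorm p x.1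

end MismatchDefs

/-- The graph `H_k` on vertex set `{0, 1, …, 2k−1}`: the Hamiltonian cycle
`0 − 1 − ⋯ − (2k−1) − 0` together with, for even `k`, the chords `{i, i+2}` for
`i ≡ 0, 1 (mod 4)`, and for odd `k`, the chords `{i, i−2}` for `i ≡ 2 (mod 4)`,
`{i, i+2}` for `i ≡ 3 (mod 4)`, and `{2k−2, 1}`. -/
def Hk (k : ℕ) : SimpleGraph (Fin (2 * k)) :=
  SimpleGraph.fromRel (fun a b =>
    (b.val = a.val + 1) ∨ (a.val = 2 * k - 1 ∧ b.val = 0) ∨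
    (if k % 2 = 0 then
      (a.val % 4 = 0 ∨ a.val % 4 = 1) ∧ b.val = a.val + 2
    else
      (a.val % 4 = 2 ∧ b.val = a.val - 2) ∨ (a.val % 4 = 3 ∧ b.val = a.val + 2) ∨
        (a.val = 2 * k - 2 ∧ b.val = 1)))

/-- Attach `5` new pendant leaves to every vertex satisfying `P` and `12` new pendant
leaves to every other vertex. The leaves of `v` are `Sum.inr ⟨v, i⟩`. -/
def hatGraph {V : Type*} (G : SimpleGraph V) (P : V → Prop) [DecidablePred P] :
    SimpleGraph (V ⊕ Σ v : V, Fin (if P v then 5 else 12)) :=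
  SimpleGraph.fromRel (fun a b =>
    match a, b with
    | Sum.inl u, Sum.inl v => G.Adj u v
    | Sum.inl u, Sum.inr x => u = x.1
    | _, _ => False)

/-- `σ ∈ Res(G_k, H_k)`: the bijection `σ` maps the independent set `A` onto the even
vertices `Even(2k)` (and hence its complement `B` onto the odd vertices `Odd(2k)`). -/
def InRes {V : Type*} (k : ℕ) (A : Finset V) (σ : V ≃ Fin (2 * k)) : Prop :=
  ∀ v, v ∈ A ↔ (σ v).val % 2 = 0

section Aux

open SimpleGraph Walk

/-- Adjacency of consecutive vertices in the cycle graph. -/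
lemma cg_adj_succ {n : ℕ} (i : ℕ) (h1 : i + 1 < n + 3) :
    (cycleGraph (n + 3)).Adj ⟨i + 1, h1⟩ ⟨i, by omega⟩ := by
  rw [cycleGraph_adj']
  left
  rw [Fin.sub_def]
  simp only
  have h2 : (n + 3 - i + (i + 1)) = (n + 3) + 1 := by omega
  rw [h2, Nat.add_mod_left, Nat.mod_eq_of_lt (by omega)]

lemma cg_adj_zero {n : ℕ} :
    (cycleGraph (n + 3)).Adj ⟨0, by omega⟩ ⟨n + 2, by omega⟩ := by
  rw [cycleGraph_adj']
  left
  rw [Fin.sub_def]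
  simp only
  have h2 : (n + 3 - (n + 2) + 0) = 1 := by omega
  rw [h2, Nat.mod_eq_of_lt (by omega)]

/-- The descending walk `m → m-1 → ⋯ → 0` in the cycle graph. -/
def descWalk (n : ℕ) : (m : ℕ) → (h : m < n + 3) →
    (cycleGraph (n + 3)).Walk ⟨m, h⟩ ⟨0, by omega⟩
  | 0, _ => Walk.nil
  | m + 1, h => Walk.cons (cg_adj_succ m h) (descWalk n m (by omega))

lemma descWalk_zero (n : ℕ) (h : 0 < n + 3) : descWalk n 0 h = Walk.nil := rfl

lemma descWalk_succ (n m : ℕ) (h : m + 1 < n + 3) :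
    descWalk n (m + 1) h = Walk.cons (cg_adj_succ m h) (descWalk n m (by omega)) := rfl

/-- Auxiliary cast from `ℕ` to `Fin (n + 3)`. -/
def finOf (n i : ℕ) : Fin (n + 3) := ⟨i % (n + 3), Nat.mod_lt _ (by omega)⟩

lemma finOf_val (n i : ℕ) (h : i < n + 3) : (finOf n i).val = i := Nat.mod_eq_of_lt h

lemma descWalk_support (n m : ℕ) (h : m < n + 3) :
    (descWalk n m h).support
      = ((List.range (m + 1)).map (finOf n)).reverse := by
  induction m with
  | zero =>
      rw [descWalk_zero, Walk.support_nil]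
      simp only [List.range_succ, List.range_zero, List.nil_append, List.map_cons, List.map_nil,
        List.reverse_cons, List.reverse_nil]
      exact congrArg (fun a => [a]) (Fin.ext (finOf_val n 0 (by omega))).symm
  | succ m ih =>
      rw [descWalk_succ, Walk.support_cons, List.range_succ]
      simp only [List.map_append, List.map_cons, List.map_nil, List.reverse_append,
        List.reverse_cons, List.reverse_nil, List.nil_append, List.cons_append]
      rw [ih (by omega)]
      congr 1
      exact (Fin.ext (finOf_val n (m+1) h) : finOf n (m+1) = ⟨m+1, h⟩).symm

lemma descWalk_edges (n m : ℕ) (h : m < n + 3) :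
    s((⟨0, by omega⟩ : Fin (n + 3)), (⟨n + 2, by omega⟩ : Fin (n + 3)))
      ∉ (descWalk n m h).edges := by
  induction m with
  | zero => rw [descWalk_zero]; simp
  | succ m ih =>
      rw [descWalk_succ, Walk.edges_cons]
      intro hmem
      rcases List.mem_cons.1 hmem with hc | hc
      · rw [Sym2.eq_iff] at hc
        rcases hc with ⟨h1, h2⟩ | ⟨h1, h2⟩
        · exact absurd (congrArg Fin.val h1) (by simp)
        · have e1 : (0 : ℕ) = m := congrArg Fin.val h1
          have e2 : n + 2 = m + 1 := congrArg Fin.val h2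
          omega
      · exact ih (by omega) hc

lemma range_map_nodup (n m : ℕ) (h : m ≤ n + 3) :
    ((List.range m).map (finOf n)).Nodup := by
  refine List.Nodup.map_on ?_ List.nodup_range
  intro i hi j hj hij
  rw [List.mem_range] at hi hj
  have h2 := congrArg Fin.val hij
  rwa [finOf_val n i (by omega), finOf_val n j (by omega)] at h2

/-- The cycle graph on at least 3 vertices has a Hamiltonian cycle. -/
lemma cycleGraph_hamCycle (n : ℕ) :
    ∃ a, ∃ p : (cycleGraph (n + 3)).Walk a a, p.IsHamiltonianCycle := by
  refine ⟨⟨0, by omega⟩, Walk.cons cg_adj_zero (descWalk n (n + 2) (by omega)), ?_⟩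
  rw [isHamiltonianCycle_iff_isCycle_and_support_count_tail_eq_one]
  constructor
  · rw [Walk.cons_isCycle_iff]
    constructor
    · rw [Walk.isPath_def, descWalk_support]
      exact List.nodup_reverse.2 (range_map_nodup n (n + 3) le_rfl)
    · exact descWalk_edges n (n + 2) (by omega)
  · intro a
    rw [Walk.support_cons, List.tail_cons, descWalk_support]
    refine List.count_eq_one_of_mem (List.nodup_reverse.2 (range_map_nodup n (n + 3) le_rfl)) ?_
    rw [List.mem_reverse, List.mem_map]
    exact ⟨a.val, List.mem_range.2 a.isLt, Fin.ext (finOf_val n a.val a.isLt)⟩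

/-- If there is a cyclic ordering of the vertices with consecutive vertices adjacent,
then the graph is Hamiltonian. -/
lemma isHamiltonian_of_cyclic {V : Type*} [Fintype V] [DecidableEq V] {n : ℕ} [NeZero n] (hn : 3 ≤ n)
    (G : SimpleGraph V) (σ : V ≃ Fin n)
    (hadj : ∀ i : Fin n, G.Adj (σ.symm i) (σ.symm (i + 1))) : G.IsHamiltonian := by
  obtain ⟨N, rfl⟩ : ∃ N, n = N + 3 := ⟨n - 3, by omega⟩
  have hone : (1 : Fin (N + 3)) = ⟨1, by omega⟩ := rfl
  -- graph hom from the cycle graph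
  have hcg : ∀ u v : Fin (N + 3), (cycleGraph (N + 3)).Adj u v →
      G.Adj (σ.symm u) (σ.symm v) := by
    intro u v huv
    rw [cycleGraph_adj] at huv
    rcases huv with h1 | h1
    · have : u = v + 1 := by
        have := sub_eq_iff_eq_add.1 h1
        rw [this]; exact add_comm _ _
      rw [this]
      exact (hadj v).symm
    · have : v = u + 1 := by
        have := sub_eq_iff_eq_add.1 h1
        rw [this]; exact add_comm _ _
      rw [this]
      exact hadj u
  let f : cycleGraph (N + 3) →g G :=
    ⟨fun i => σ.symm i, fun {u v} h => hcg u v h⟩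
  have hf : Function.Bijective f := σ.symm.bijective
  intro _
  obtain ⟨a, p, hp⟩ := cycleGraph_hamCycle N
  exact ⟨f a, p.map f, hp.map hf⟩

end Aux

/-- Let `k ≥ 2` be even, and let `G` be a 3-regular bipartite graph on
`2k` vertices with bipartition into independent sets `A`, `B` of size `k`. If `G` has no
Hamiltonian cycle, then every `σ ∈ Res(G, H_k)` satisfies `MMC(σ) ≥ 4`. -/
theorem statement_8 {V : Type*} [Fintype V] [DecidableEq V] (k : ℕ) (hk : 2 ≤ k)
    (hkpar : Even k)
    (G : SimpleGraph V) [DecidableRel G.Adj] (A B : Finset V)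
    (hcard : Fintype.card V = 2 * k) (hA : A.card = k) (hB : B.card = k)
    (hUnion : ∀ v, v ∈ A ∨ v ∈ B) (hDisj : Disjoint A B)
    (hreg : G.IsRegularOfDegree 3)
    (hAind : ∀ u ∈ A, ∀ v ∈ A, ¬ G.Adj u v) (hBind : ∀ u ∈ B, ∀ v ∈ B, ¬ G.Adj u v)
    (hHam : ¬ G.IsHamiltonian) :
    ∀ σ : V ≃ Fin (2 * k), InRes k A σ → 4 ≤ MMC G (Hk k) σ := by
  intro σ hres
  by_contra hcon
  push_neg at hcon
  apply hHam
  haveI : NeZero (2 * k) := ⟨by omega⟩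
  obtain ⟨m, hm⟩ := hkpar
  have hk2 : k % 2 = 0 := by omega
  have hv1 : (1 : Fin (2 * k)).val = 1 := by
    rw [Fin.val_one']; exact Nat.mod_eq_of_lt (by omega)
  have hvadd : ∀ x : Fin (2 * k), (x + 1).val = (x.val + 1) % (2 * k) := by
    intro x; rw [Fin.add_def, hv1]
  -- adjacency in the mapped graph
  have hmap : ∀ x y : Fin (2 * k),
      (G.map σ.toEmbedding).Adj x y ↔ G.Adj (σ.symm x) (σ.symm y) := by
    intro x y
    simp only [SimpleGraph.map_adj, Equiv.coe_toEmbedding]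
    constructor
    · rintro ⟨-, u, v, huv, rfl, rfl⟩
      simpa using huv
    · intro h
      exact ⟨fun he => G.ne_of_adj h (by rw [he]), σ.symm x, σ.symm y, h, by simp, by simp⟩
  -- adjacent vertices of G have opposite parity under σ
  have hpar : ∀ x y : Fin (2 * k), G.Adj (σ.symm x) (σ.symm y) →
      x.val % 2 ≠ y.val % 2 := by
    intro x y hadj heq
    have hrx := hres (σ.symm x)
    have hry := hres (σ.symm y)
    rw [Equiv.apply_symm_apply] at hrx hry
    by_cases hx : σ.symm x ∈ A
    · have h0 := hrx.1 hx
      have hy : σ.symm y ∈ A := hry.2 (by omega)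
      exact hAind _ hx _ hy hadj
    · have hx' : σ.symm x ∈ B := (hUnion _).resolve_left hx
      have hy : σ.symm y ∉ A := fun h => hx (hrx.2 (by have := hry.1 h; omega))
      have hy' : σ.symm y ∈ B := (hUnion _).resolve_left hy
      exact hBind _ hx' _ hy' hadj
  -- unfolded adjacency for Hk
  have hHadj : ∀ a b : Fin (2 * k), (Hk k).Adj a b ↔ a ≠ b ∧
      (((b.val = a.val + 1) ∨ (a.val = 2 * k - 1 ∧ b.val = 0) ∨
          ((a.val % 4 = 0 ∨ a.val % 4 = 1) ∧ b.val = a.val + 2)) ∨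
       ((a.val = b.val + 1) ∨ (b.val = 2 * k - 1 ∧ a.val = 0) ∨
          ((b.val % 4 = 0 ∨ b.val % 4 = 1) ∧ a.val = b.val + 2))) := by
    intro a b
    rw [Hk, SimpleGraph.fromRel_adj, if_pos hk2, if_pos hk2]
  -- successive vertices are adjacent in Hk
  have hsucc : ∀ x : Fin (2 * k), (Hk k).Adj x (x + 1) := by
    intro x
    rw [hHadj]
    rcases Nat.lt_or_ge (x.val + 1) (2 * k) with hlt | hge
    · have hv : (x + 1).val = x.val + 1 := by rw [hvadd, Nat.mod_eq_of_lt hlt]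
      refine ⟨fun he => ?_, Or.inl (Or.inl hv)⟩
      have := congrArg Fin.val he; omega
    · have hx : x.val = 2 * k - 1 := by have := x.isLt; omega
      have hv : (x + 1).val = 0 := by
        rw [hvadd]
        have h2 : x.val + 1 = 2 * k := by omega
        rw [h2, Nat.mod_self]
      refine ⟨fun he => ?_, Or.inl (Or.inr (Or.inl ⟨hx, hv⟩))⟩
      have := congrArg Fin.val he; omega
  -- the chord at each vertex: a neighbor of the same parity
  have hchord : ∀ x : Fin (2 * k), ∃ c : Fin (2 * k),
      (Hk k).Adj x c ∧ c.val % 2 = x.val % 2 := by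
    intro x
    have hxlt := x.isLt
    rcases Nat.lt_or_ge (x.val % 4) 2 with h4 | h4
    · have hlt : x.val + 2 < 2 * k := by omega
      refine ⟨⟨x.val + 2, hlt⟩, ?_, show (x.val + 2) % 2 = x.val % 2 by omega⟩
      rw [hHadj]
      refine ⟨fun he => ?_, Or.inl (Or.inr (Or.inr ⟨by omega, rfl⟩))⟩
      have h5 : x.val = x.val + 2 := congrArg Fin.val he
      omega
    · have hge2 : 2 ≤ x.val := by omega
      refine ⟨⟨x.val - 2, by omega⟩, ?_, show (x.val - 2) % 2 = x.val % 2 by omega⟩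
      rw [hHadj]
      refine ⟨fun he => ?_, Or.inr (Or.inr (Or.inr
        ⟨show (x.val - 2) % 4 = 0 ∨ (x.val - 2) % 4 = 1 by omega,
         show x.val = (x.val - 2) + 2 by omega⟩))⟩
      have h5 : x.val = x.val - 2 := congrArg Fin.val he
      omega
  -- opposite-parity neighbors in Hk are the cycle neighbors
  have hopp : ∀ x y : Fin (2 * k), (Hk k).Adj x y → y.val % 2 ≠ x.val % 2 →
      y = x + 1 ∨ x = y + 1 := by
    intro x y hadj hp
    rw [hHadj] at hadj
    obtain ⟨hne, hrel⟩ := hadj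
    have hxlt := x.isLt
    have hylt := y.isLt
    rcases hrel with (h | h | h) | (h | h | h)
    · left; exact Fin.ext (by rw [hvadd, Nat.mod_eq_of_lt (by omega)]; omega)
    · left
      refine Fin.ext ?_
      rw [hvadd]
      have h2 : x.val + 1 = 2 * k := by omega
      rw [h2, Nat.mod_self]; omega
    · exact absurd rfl (by omega : y.val % 2 ≠ y.val % 2)
    · right; exact Fin.ext (by rw [hvadd, Nat.mod_eq_of_lt (by omega)]; omega)
    · right
      refine Fin.ext ?_
      rw [hvadd]
      have h2 : y.val + 1 = 2 * k := by omega
      rw [h2, Nat.mod_self]; omega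
    · exact absurd rfl (by omega : y.val % 2 ≠ y.val % 2)
  -- parity of the cycle successor
  have hparx1 : ∀ x : Fin (2 * k), (x + 1).val % 2 ≠ x.val % 2 := by
    intro x
    have hxlt := x.isLt
    rcases Nat.lt_or_ge (x.val + 1) (2 * k) with hlt | hge
    · rw [hvadd, Nat.mod_eq_of_lt hlt]; omega
    · have h2 : x.val + 1 = 2 * k := by omega
      rw [hvadd, h2, Nat.mod_self]; omega
  -- the key step: consecutive vertices of the cycle are adjacent in G
  have key : ∀ x : Fin (2 * k), G.Adj (σ.symm x) (σ.symm (x + 1)) := by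
    intro x
    by_contra hnadj
    have hle : mismatchDeg G (Hk k) σ x ≤ 3 := by
      have h1 : mismatchDeg G (Hk k) σ x ≤ Finset.univ.sup (mismatchDeg G (Hk k) σ) :=
        Finset.le_sup (Finset.mem_univ x)
      have h2 : Finset.univ.sup (mismatchDeg G (Hk k) σ) < 4 := hcon
      omega
    set S := (G.map σ.toEmbedding).neighborSet x with hSdef
    set T := (Hk k).neighborSet x with hTdef
    have hU : (mismatchGraph G (Hk k) σ).neighborSet x = (S \ T) ∪ (T \ S) := by
      ext y
      simp only [hSdef, hTdef, mismatchGraph, SimpleGraph.mem_neighborSet, symmDiff_def,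
        SimpleGraph.sup_adj, SimpleGraph.sdiff_adj, Set.mem_union, Set.mem_diff]
    have hS3 : S.ncard = 3 := by
      have himg : S = σ '' (G.neighborSet (σ.symm x)) := by
        ext y
        simp only [hSdef, SimpleGraph.mem_neighborSet, hmap, Set.mem_image]
        constructor
        · intro h; exact ⟨σ.symm y, h, by simp⟩
        · rintro ⟨v, hv, rfl⟩; simpa using hv
      rw [himg, Set.ncard_image_of_injective _ σ.injective,
        Set.ncard_eq_toFinset_card', ← SimpleGraph.neighborFinset_def]
      exact hreg (σ.symm x)
    have hx1T : (x + 1) ∈ T := hsucc x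
    have hx1S : (x + 1) ∉ S := fun h => hnadj ((hmap x (x + 1)).1 h)
    obtain ⟨c, hcT, hcpar⟩ := hchord x
    have hcS : c ∉ S := fun h => hpar x c ((hmap x c).1 h) (by omega)
    have hcx1 : c ≠ x + 1 := by
      intro he
      rw [he] at hcpar
      exact hparx1 x hcpar
    have hTS2 : 2 ≤ (T \ S).ncard := by
      have hsub : ({c, x + 1} : Set (Fin (2 * k))) ⊆ T \ S := by
        intro y hy
        rcases hy with rfl | rfl
        · exact ⟨hcT, hcS⟩
        · exact ⟨hx1T, hx1S⟩
      calc 2 = ({c, x + 1} : Set (Fin (2 * k))).ncard := (Set.ncard_pair hcx1).symm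
        _ ≤ (T \ S).ncard := Set.ncard_le_ncard hsub (Set.toFinite _)
    have hST : S ∩ T ⊆ {y : Fin (2 * k) | x = y + 1} := by
      rintro y ⟨hyS, hyT⟩
      have hadj := (hmap x y).1 hyS
      have hp := hpar x y hadj
      rcases hopp x y hyT (by omega) with h1 | h1
      · exact absurd (h1 ▸ hyS) hx1S
      · exact h1
    have hST1 : (S ∩ T).ncard ≤ 1 := by
      have hone : ({y : Fin (2 * k) | x = y + 1} : Set (Fin (2 * k))).ncard ≤ 1 := by
        have : ({y : Fin (2 * k) | x = y + 1} : Set (Fin (2 * k))) ⊆ {x - 1} := by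
          intro y hy
          have : y = x - 1 := by
            have h1 : x = y + 1 := hy
            rw [h1, add_sub_cancel_right]
          exact this
        calc ({y : Fin (2 * k) | x = y + 1} : Set (Fin (2 * k))).ncard
            ≤ ({x - 1} : Set (Fin (2 * k))).ncard := Set.ncard_le_ncard this (Set.toFinite _)
          _ = 1 := Set.ncard_singleton _
      exact le_trans (Set.ncard_le_ncard hST (Set.toFinite _)) hone
    have hsplit : S.ncard ≤ (S \ T).ncard + (S ∩ T).ncard := by
      calc S.ncard ≤ ((S \ T) ∪ (S ∩ T)).ncard := by
            refine Set.ncard_le_ncard (fun y hy => ?_) (Set.toFinite _)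
            by_cases h : y ∈ T
            · exact Or.inr ⟨hy, h⟩
            · exact Or.inl ⟨hy, h⟩
        _ ≤ (S \ T).ncard + (S ∩ T).ncard := Set.ncard_union_le _ _
    have hsum : mismatchDeg G (Hk k) σ x = (S \ T).ncard + (T \ S).ncard := by
      rw [mismatchDeg, hU, Set.ncard_union_eq disjoint_sdiff_sdiff (Set.toFinite _)
        (Set.toFinite _)]
    omega
  exact isHamiltonian_of_cyclic (n := 2 * k) (by omega) G σ key
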